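/- Let G = (V,E) be an undirected connected simple graph on n vertices, let T_ij be the number of common neighbors of adjacent i and j, let α = (1/n)·Σ_{(i,j)∈E} 2/(T_ij+2), and let p_ij = (2/(T_ij+2)) / Σ_{(k,l)∈E} (2/(T_kl+2)). Then for every edge (i,j) ∈ E, (1/p_ij)·(e_i − e_j)^T L_G⁺ (e_i − e_j) ≤ n·α, where L_G⁺ is the Moore–Penrose pseudoinverse of the Laplacian L_G of G. -/

import Mathlib

open Matrix Finset

/-- The number of common neighbors of the endpoints of an (unordered) edge. -/
def edgeCommonNbrs {V : Type*} [Fintype V] [DecidableEq V]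
    (G : SimpleGraph V) [DecidableRel G.Adj] : Sym2 V → ℕ :=
  Sym2.lift ⟨fun i j => (G.neighborFinset i ∩ G.neighborFinset j).card,
    fun i j => by simp [Finset.inter_comm]⟩

/-- The parameter `α = (1/n) Σ_{(i,j)∈E} 2/(T_ij + 2)`, the sum running over unordered edges. -/
noncomputable def alphaParam {V : Type*} [Fintype V] [DecidableEq V]
    (G : SimpleGraph V) [DecidableRel G.Adj] : ℝ :=
  (Fintype.card V : ℝ)⁻¹ * ∑ e ∈ G.edgeFinset, 2 / ((edgeCommonNbrs G e : ℝ) + 2)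

/-- The sampling probability `p_e = (2/(T_e+2)) / Σ_{e'∈E} 2/(T_{e'}+2)` of an edge `e`. -/
noncomputable def samplingProb {V : Type*} [Fintype V] [DecidableEq V]
    (G : SimpleGraph V) [DecidableRel G.Adj] (e : Sym2 V) : ℝ :=
  (2 / ((edgeCommonNbrs G e : ℝ) + 2)) /
    ∑ e' ∈ G.edgeFinset, 2 / ((edgeCommonNbrs G e' : ℝ) + 2)

/-- `M` is the Moore–Penrose pseudoinverse of `L`: the four Penrose conditions. -/
def IsMoorePenroseInverse {V : Type*} [Fintype V] [DecidableEq V]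
    (L M : Matrix V V ℝ) : Prop :=
  L * M * L = L ∧ M * L * M = M ∧ (L * M)ᵀ = L * M ∧ (M * L)ᵀ = M * L


lemma key_resistance_bound {V : Type*} [Fintype V] [DecidableEq V]
    (G : SimpleGraph V) [DecidableRel G.Adj] (hconn : G.Connected)
    (i j : V) (hadj : G.Adj i j)
    (M : Matrix V V ℝ) (hM : IsMoorePenroseInverse (G.lapMatrix ℝ) M) :
    (Pi.single i 1 - Pi.single j 1) ⬝ᵥ M *ᵥ (Pi.single i 1 - Pi.single j 1)
      ≤ 2 / (((G.neighborFinset i ∩ G.neighborFinset j).card : ℝ) + 2) := by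
  classical
  obtain ⟨h1, h2, h3, h4⟩ := hM
  set L : Matrix V V ℝ := G.lapMatrix ℝ with hLdef
  have hLsym : Lᵀ = L := G.isSymm_lapMatrix (R := ℝ)
  set d : V → ℝ := Pi.single i 1 - Pi.single j 1 with hd
  set x : V → ℝ := M *ᵥ d with hx
  have hij : i ≠ j := hadj.ne
  -- The matrix N = 1 - L*M satisfies Nᵀ * L = 0.
  set N : Matrix V V ℝ := 1 - L * M with hN
  have hNL : Nᵀ * L = 0 := by
    rw [hN, transpose_sub, transpose_one, h3, sub_mul, one_mul, h1, sub_self]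
  set w : V → ℝ := N *ᵥ d with hw
  -- quadratic form of w is zero
  have hq : w ⬝ᵥ L *ᵥ w = 0 := by
    rw [hw, mulVec_mulVec, ← vecMul_transpose, dotProduct_mulVec, vecMul_vecMul,
      ← Matrix.mul_assoc, hNL, Matrix.zero_mul]
    simp
  -- hence w is constant
  have hconst : ∀ u v : V, w u = w v := by
    intro u v
    exact (G.lapMatrix_toLinearMap₂'_apply'_eq_zero_iff_forall_reachable w).mp
      (by rw [Matrix.toLinearMap₂'_apply']; exact hq) u v (hconn.preconnected u v)
  -- sum of w is zero
  have hsumd : ∑ u, d u = 0 := by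
    simp [hd, Finset.sum_sub_distrib, Finset.sum_pi_single]
  have hsumw : ∑ u, w u = 0 := by
    have hone : (fun _ : V => (1:ℝ)) ᵥ* L = 0 := by
      have h7 : L *ᵥ (fun _ : V => (1:ℝ)) = 0 := G.lapMatrix_mulVec_const_eq_zero
      rw [← hLsym, mulVec_transpose] at h7
      exact h7
    have h8 : ∑ u, w u = (fun _ : V => (1:ℝ)) ⬝ᵥ w := by simp [dotProduct]
    rw [h8, hw, dotProduct_mulVec, hN, vecMul_sub, vecMul_one, ← vecMul_vecMul, hone]
    simp [dotProduct, hsumd]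
  -- w = 0, hence L *ᵥ x = d
  have hw0 : w = 0 := by
    funext u
    have h5 : ∑ v, w v = (Fintype.card V : ℝ) * w u := by
      rw [Finset.sum_congr rfl (fun v _ => hconst v u)]
      simp [Finset.card_univ, mul_comm]
    rw [hsumw] at h5
    have hcard : (0:ℝ) < (Fintype.card V : ℝ) := by
      exact_mod_cast Fintype.card_pos_iff.mpr ⟨i⟩
    have := (mul_eq_zero.mp h5.symm).resolve_left (ne_of_gt hcard)
    simpa using this
  have hLx : L *ᵥ x = d := by
    have h9 : N *ᵥ d = d - (L * M) *ᵥ d := by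
      rw [hN, sub_mulVec, one_mulVec]
    have h6 : d - (L * M) *ᵥ d = 0 := by rw [← h9, ← hw, hw0]
    rw [sub_eq_zero] at h6
    rw [hx, mulVec_mulVec]
    exact h6.symm
  -- the effective resistance R
  have hRd : d ⬝ᵥ x = x i - x j := by
    simp [hd, dotProduct, Pi.sub_apply, Pi.single_apply, sub_mul, Finset.sum_sub_distrib]
  have hQ : x ⬝ᵥ L *ᵥ x = x i - x j := by
    rw [hLx, dotProduct_comm]; exact hRd
  have hS : x ⬝ᵥ L *ᵥ x
      = (∑ u : V, ∑ v : V, if G.Adj u v then (x u - x v)^2 else 0) / 2 := by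
    rw [← Matrix.toLinearMap₂'_apply']
    exact G.lapMatrix_toLinearMap₂' (R := ℝ) x
  set R : ℝ := x i - x j with hR
  set T : ℕ := (G.neighborFinset i ∩ G.neighborFinset j).card with hT
  set Nbr : Finset V := G.neighborFinset i ∩ G.neighborFinset j with hNbr
  set F : V → V → ℝ := fun u v => if G.Adj u v then (x u - x v)^2 else 0 with hF
  have hF0 : ∀ u v, 0 ≤ F u v := by
    intro u v; rw [hF]; dsimp only; split <;> positivity
  have hiN : i ∉ Nbr := by
    simp [hNbr, SimpleGraph.mem_neighborFinset]
  have hjN : j ∉ Nbr := by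
    simp [hNbr, SimpleGraph.mem_neighborFinset]
  -- lower bound on the Dirichlet energy
  have hlow : (T + 2 : ℝ) * R^2 ≤ ∑ u : V, ∑ v : V, F u v := by
    have step1 : ∑ u ∈ insert i (insert j Nbr), ∑ v : V, F u v
        ≤ ∑ u : V, ∑ v : V, F u v := by
      apply Finset.sum_le_sum_of_subset_of_nonneg (Finset.subset_univ _)
      intro u _ _
      exact Finset.sum_nonneg fun v _ => hF0 u v
    rw [Finset.sum_insert (by simp [hiN, hij]), Finset.sum_insert hjN] at step1
    have bi : F i j + ∑ k ∈ Nbr, F i k ≤ ∑ v : V, F i v := by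
      rw [← Finset.sum_insert hjN]
      exact Finset.sum_le_sum_of_subset_of_nonneg (Finset.subset_univ _)
        (fun v _ _ => hF0 i v)
    have bj : F j i + ∑ k ∈ Nbr, F j k ≤ ∑ v : V, F j v := by
      rw [← Finset.sum_insert hiN]
      exact Finset.sum_le_sum_of_subset_of_nonneg (Finset.subset_univ _)
        (fun v _ _ => hF0 j v)
    have bk : ∀ k ∈ Nbr, F k i + F k j ≤ ∑ v : V, F k v := by
      intro k hk
      have : ∑ v ∈ insert i ({j} : Finset V), F k v = F k i + F k j := by
        rw [Finset.sum_insert (by simp [hij]), Finset.sum_singleton]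
      rw [← this]
      exact Finset.sum_le_sum_of_subset_of_nonneg (Finset.subset_univ _)
        (fun v _ _ => hF0 k v)
    have bks : ∑ k ∈ Nbr, (F k i + F k j) ≤ ∑ k ∈ Nbr, ∑ v : V, F k v :=
      Finset.sum_le_sum bk
    -- evaluate the explicit F terms
    have hFij : F i j = R^2 := by rw [hF]; simp [hadj, hR]
    have hFji : F j i = R^2 := by
      rw [hF]; simp only [hadj.symm, if_true]
      rw [hR]; ring
    have hmem : ∀ k ∈ Nbr, G.Adj i k ∧ G.Adj j k := by
      intro k hk
      rw [hNbr, Finset.mem_inter, SimpleGraph.mem_neighborFinset,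
        SimpleGraph.mem_neighborFinset] at hk
      exact hk
    have hper : ∀ k ∈ Nbr, R^2 ≤ (F i k + F k j) + (F j k + F k i) := by
      intro k hk
      obtain ⟨hik, hjk⟩ := hmem k hk
      rw [hF]
      simp only [hik, hjk, hik.symm, hjk.symm, if_true]
      rw [hR]
      nlinarith [sq_nonneg (x i + x j - 2 * x k)]
    have hsumper : (T : ℝ) * R^2
        ≤ ∑ k ∈ Nbr, ((F i k + F k j) + (F j k + F k i)) := by
      have := Finset.sum_le_sum hper
      rw [Finset.sum_const, nsmul_eq_mul] at this
      rw [hT, hNbr]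
      exact this
    have expand : ∑ k ∈ Nbr, ((F i k + F k j) + (F j k + F k i))
        = ∑ k ∈ Nbr, F i k + ∑ k ∈ Nbr, F j k + ∑ k ∈ Nbr, (F k i + F k j) := by
      rw [← Finset.sum_add_distrib, ← Finset.sum_add_distrib]
      apply Finset.sum_congr rfl; intro k _; ring
    nlinarith [hFij, hFji]
  -- conclude
  have hTpos : (0:ℝ) < (T:ℝ) + 2 := by positivity
  have hRle : R ≤ 2 / ((T:ℝ) + 2) := by
    have hkey : 2 * R ≥ ((T:ℝ) + 2) * R^2 := by
      have : x ⬝ᵥ L *ᵥ x = R := hQ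
      rw [hS] at this
      linarith [hlow, this]
    rw [ge_iff_le, le_div_iff₀ hTpos] at *
    nlinarith [sq_nonneg (2 - ((T:ℝ)+2) * R), mul_nonneg hTpos.le (sub_nonneg.mpr hkey)]
  calc d ⬝ᵥ M *ᵥ d = R := by rw [← hx, hRd]
    _ ≤ 2 / ((T:ℝ) + 2) := hRle

/-- For every edge `(i,j)` of a connected graph `G`,
`(1/p_ij) (e_i − e_j)ᵀ L_G⁺ (e_i − e_j) ≤ n α`. -/
theorem inv_prob_mul_effective_resistance_le
    {V : Type*} [Fintype V] [DecidableEq V]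
    (G : SimpleGraph V) [DecidableRel G.Adj] (hconn : G.Connected)
    (i j : V) (hadj : G.Adj i j)
    (M : Matrix V V ℝ) (hM : IsMoorePenroseInverse (G.lapMatrix ℝ) M) :
    (samplingProb G s(i, j))⁻¹ *
        ((Pi.single i 1 - Pi.single j 1) ⬝ᵥ M *ᵥ (Pi.single i 1 - Pi.single j 1))
      ≤ (Fintype.card V : ℝ) * alphaParam G := by
  classical
  have hT : edgeCommonNbrs G s(i, j)
      = (G.neighborFinset i ∩ G.neighborFinset j).card := rfl
  set t : ℝ := (edgeCommonNbrs G s(i, j) : ℝ) + 2 with ht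
  have htpos : (0:ℝ) < t := by positivity
  set Ssum : ℝ := ∑ e ∈ G.edgeFinset, 2 / ((edgeCommonNbrs G e : ℝ) + 2) with hSsum
  have hSpos : 0 < Ssum := by
    apply Finset.sum_pos
    · intro e _; positivity
    · exact ⟨s(i, j), by rwa [SimpleGraph.mem_edgeFinset, SimpleGraph.mem_edgeSet]⟩
  have hn : (0:ℝ) < (Fintype.card V : ℝ) := by
    exact_mod_cast Fintype.card_pos_iff.mpr ⟨i⟩
  have hRHS : (Fintype.card V : ℝ) * alphaParam G = Ssum := by
    rw [alphaParam, ← mul_assoc, mul_inv_cancel₀ (ne_of_gt hn), one_mul]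
  have hinv : (samplingProb G s(i, j))⁻¹ = Ssum * t / 2 := by
    rw [samplingProb, ← hSsum, ← ht]
    field_simp
  have hRle := key_resistance_bound G hconn i j hadj M hM
  rw [← hT, ← ht] at hRle
  rw [hRHS, hinv]
  rw [le_div_iff₀ htpos] at hRle
  set R : ℝ := (Pi.single i 1 - Pi.single j 1) ⬝ᵥ M *ᵥ (Pi.single i 1 - Pi.single j 1)
  calc Ssum * t / 2 * R = Ssum * (R * t) / 2 := by ring
    _ ≤ Ssum * 2 / 2 := by
        apply div_le_div_of_nonneg_right ?_ (by norm_num)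
        exact mul_le_mul_of_nonneg_left hRle hSpos.le
    _ = Ssum := by ring
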